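/- Let 𝕂 be ℝ or ℂ, let X be a 𝕂-Hilbert space, and let (b_i)_{i∈ι} be a Hilbert basis of X. Then for all ξ, η ∈ X the family i ↦ ⟨b_i, ξ⟩·⟨b_i, η⟩ • b_i is summable in X, and its sum ξ * η satisfies ‖ξ * η‖ ≤ ‖ξ‖ · ‖η‖. -/

import Mathlib

/-- For a Hilbert basis `b` of a `𝕜`-Hilbert space `X` (`𝕜 = ℝ` or `ℂ`),
the family `i ↦ ⟨b i, ξ⟩⟨b i, η⟩ • b i` is summable and the norm of its sum
(the abstract convolution `ξ * η`) is at most `‖ξ‖ * ‖η‖`. -/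
theorem stmt_0 {𝕜 : Type*} [RCLike 𝕜] {X : Type*} [NormedAddCommGroup X]
    [InnerProductSpace 𝕜 X] [CompleteSpace X] {ι : Type*}
    (b : HilbertBasis ι 𝕜 X) (ξ η : X) :
    Summable (fun i : ι => ((inner 𝕜 (b i) ξ : 𝕜) * (inner 𝕜 (b i) η : 𝕜)) • b i) ∧
      ‖∑' i : ι, ((inner 𝕜 (b i) ξ : 𝕜) * (inner 𝕜 (b i) η : 𝕜)) • b i‖ ≤ ‖ξ‖ * ‖η‖ := by
  have h2 : (0:ℝ) < (2 : ENNReal).toReal := by norm_num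
  set f : ι → 𝕜 := fun i => (b.repr ξ i) * (b.repr η i) with hf_def
  -- summability of squared norms
  have hη : Summable fun i => ‖b.repr η i‖ ^ (2 : ENNReal).toReal :=
    (lp.memℓp (b.repr η)).summable h2
  have hξ : Summable fun i => ‖b.repr ξ i‖ ^ (2 : ENNReal).toReal :=
    (lp.memℓp (b.repr ξ)).summable h2
  have hbound : ∀ i, ‖f i‖ ^ (2 : ENNReal).toReal ≤
      ‖ξ‖ ^ (2 : ENNReal).toReal * ‖b.repr η i‖ ^ (2 : ENNReal).toReal := by
    intro i
    have h1 : ‖b.repr ξ i‖ ≤ ‖ξ‖ := by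
      simpa using lp.norm_apply_le_norm (by norm_num) (b.repr ξ) i
    have : ‖f i‖ ^ (2 : ENNReal).toReal =
        ‖b.repr ξ i‖ ^ (2 : ENNReal).toReal * ‖b.repr η i‖ ^ (2 : ENNReal).toReal := by
      rw [hf_def]
      simp [norm_mul, Real.mul_rpow (norm_nonneg _) (norm_nonneg _)]
    rw [this]
    gcongr
  have hfsum : Summable fun i => ‖f i‖ ^ (2 : ENNReal).toReal := by
    refine Summable.of_nonneg_of_le (fun i => ?_) hbound (hη.mul_left _)
    positivity
  have hf2 : Memℓp f 2 := memℓp_gen hfsum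
  set F : lp (fun _ : ι => 𝕜) 2 := ⟨f, hf2⟩ with hF_def
  have hsum : HasSum (fun i => f i • b i) (b.repr.symm F) := b.hasSum_repr_symm F
  have heq : (fun i : ι => ((inner 𝕜 (b i) ξ : 𝕜) * (inner 𝕜 (b i) η : 𝕜)) • b i)
      = fun i => f i • b i := by
    funext i
    rw [hf_def]
    simp [b.repr_apply_apply]
  constructor
  · rw [heq]; exact hsum.summable
  · rw [heq, hsum.tsum_eq]
    have hnorm : ‖b.repr.symm F‖ = ‖F‖ := b.repr.symm.norm_map F
    rw [hnorm]
    refine lp.norm_le_of_tsum_le h2 (by positivity) ?_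
    have key : ∑' i, ‖F i‖ ^ (2 : ENNReal).toReal ≤
        ‖ξ‖ ^ (2 : ENNReal).toReal * ‖η‖ ^ (2 : ENNReal).toReal := by
      have hηnorm : ∑' i, ‖b.repr η i‖ ^ (2 : ENNReal).toReal =
          ‖η‖ ^ (2 : ENNReal).toReal := by
        rw [← lp.norm_rpow_eq_tsum h2, b.repr.norm_map]
      calc ∑' i, ‖F i‖ ^ (2 : ENNReal).toReal
          ≤ ∑' i, ‖ξ‖ ^ (2 : ENNReal).toReal * ‖b.repr η i‖ ^ (2 : ENNReal).toReal :=
            Summable.tsum_le_tsum hbound hfsum (hη.mul_left _)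
        _ = ‖ξ‖ ^ (2 : ENNReal).toReal * ∑' i, ‖b.repr η i‖ ^ (2 : ENNReal).toReal :=
            tsum_mul_left
        _ = ‖ξ‖ ^ (2 : ENNReal).toReal * ‖η‖ ^ (2 : ENNReal).toReal := by rw [hηnorm]
    calc ∑' i, ‖F i‖ ^ (2 : ENNReal).toReal
        ≤ ‖ξ‖ ^ (2 : ENNReal).toReal * ‖η‖ ^ (2 : ENNReal).toReal := key
      _ = (‖ξ‖ * ‖η‖) ^ (2 : ENNReal).toReal :=
          (Real.mul_rpow (norm_nonneg _) (norm_nonneg _)).symm
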